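/- Let Z ⊆ S_m be a linear subspace of codimension c with no base points in P^1. Then S_c · Z = S_{m+c}, i.e., the span of products of elements of Z with forms of degree c is all of S_{m+c}. -/

import Mathlib

open MvPolynomial Finset

noncomputable section

def linForm (K : Type) [Field K] (c : Fin 2 → K) : MvPolynomial (Fin 2) K :=
  C (c 0) * X 0 + C (c 1) * X 1

/-- `α` is not a scalar multiple of `β` (for nonzero vectors: distinct points of `ℙ¹`). -/
def NonProp (K : Type) [Field K] (α β : Fin 2 → K) : Prop := ∀ t : K, α ≠ t • β

/-- The Waring rank of a binary form: the least `r` such that `q` is a sum of `r`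
`d`-th powers of linear forms. -/
def waringRank (K : Type) [Field K] (d : ℕ) (q : MvPolynomial (Fin 2) K) : ℕ :=
  sInf {r : ℕ | ∃ L : Fin r → Fin 2 → K, q = ∑ i, linForm K (L i) ^ d}

namespace Stmt11Aux

variable {K : Type} [Field K]

/-- multiplication by `X^i` image -/
def Mi (K : Type) [Field K] (i : ℕ) (Y : Submodule K (Polynomial K)) :
    Submodule K (Polynomial K) :=
  Y.map (LinearMap.mulLeft K ((Polynomial.X : Polynomial K) ^ i))

/-- span of `X^i * Y` for `i ≤ c` -/
def Tc (K : Type) [Field K] (c : ℕ) (Y : Submodule K (Polynomial K)) :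
    Submodule K (Polynomial K) :=
  ⨆ i ∈ Finset.range (c + 1), Mi K i Y

lemma Mi_zero (Y : Submodule K (Polynomial K)) : Mi K 0 Y = Y := by
  simp [Mi, LinearMap.mulLeft_one, Submodule.map_id]

lemma mem_Mi {i : ℕ} {Y : Submodule K (Polynomial K)} {p : Polynomial K} (hp : p ∈ Y) :
    (Polynomial.X : Polynomial K) ^ i * p ∈ Mi K i Y :=
  ⟨p, hp, rfl⟩

lemma Mi_Mi (i j : ℕ) (Y : Submodule K (Polynomial K)) :
    Mi K i (Mi K j Y) = Mi K (i + j) Y := by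
  simp only [Mi, ← Submodule.map_comp, ← LinearMap.mulLeft_mul, ← pow_add]

lemma Mi_mono {i : ℕ} {Y Y' : Submodule K (Polynomial K)} (h : Y ≤ Y') :
    Mi K i Y ≤ Mi K i Y' := Submodule.map_mono h

lemma Mi_sup (i : ℕ) (Y Y' : Submodule K (Polynomial K)) :
    Mi K i (Y ⊔ Y') = Mi K i Y ⊔ Mi K i Y' := Submodule.map_sup _ _ _

lemma mulLeft_injective {g : Polynomial K} (hg : g ≠ 0) :
    Function.Injective (LinearMap.mulLeft K g) :=
  fun a b h => mul_left_cancel₀ hg h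

lemma finrank_map_mulLeft (g : Polynomial K) (hg : g ≠ 0) (Y : Submodule K (Polynomial K)) :
    Module.finrank K (Y.map (LinearMap.mulLeft K g)) = Module.finrank K Y := by
  have h : Y.map (LinearMap.mulLeft K g) =
      LinearMap.range ((LinearMap.mulLeft K g).comp Y.subtype) := by
    rw [LinearMap.range_comp, Submodule.range_subtype]
  rw [h, LinearMap.finrank_range_of_inj]
  exact (mulLeft_injective hg).comp Y.injective_subtype

lemma finrank_Mi (i : ℕ) (Y : Submodule K (Polynomial K)) :
    Module.finrank K (Mi K i Y) = Module.finrank K Y :=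
  finrank_map_mulLeft _ (pow_ne_zero _ Polynomial.X_ne_zero) Y

instance degreeLT_finiteDimensional (n : ℕ) :
    FiniteDimensional K (Polynomial.degreeLT K n) :=
  Module.Finite.equiv (Polynomial.degreeLTEquiv K n).symm

lemma finrank_degreeLT (n : ℕ) :
    Module.finrank K (Polynomial.degreeLT K n) = n := by
  rw [(Polynomial.degreeLTEquiv K n).finrank_eq]
  simp

lemma degreeLT_mono {a b : ℕ} (h : a ≤ b) :
    (Polynomial.degreeLT K a : Submodule K (Polynomial K)) ≤ Polynomial.degreeLT K b := by
  intro p hp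
  rw [Polynomial.mem_degreeLT] at hp ⊢
  exact lt_of_lt_of_le hp (by exact_mod_cast h)

lemma Mi_degreeLT_le {i N : ℕ} {Y : Submodule K (Polynomial K)}
    (h : Y ≤ Polynomial.degreeLT K N) : Mi K i Y ≤ Polynomial.degreeLT K (N + i) := by
  rintro p ⟨q, hq, rfl⟩
  have hq' := Polynomial.mem_degreeLT.1 (h hq)
  rw [Polynomial.mem_degreeLT]
  simp only [LinearMap.mulLeft_apply]
  calc Polynomial.degree ((Polynomial.X : Polynomial K) ^ i * q)
      ≤ Polynomial.degree ((Polynomial.X : Polynomial K) ^ i) + Polynomial.degree q :=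
        Polynomial.degree_mul_le _ _
    _ ≤ i + Polynomial.degree q := by
        gcongr
        exact Polynomial.degree_X_pow_le i
    _ < i + N := by
        exact WithBot.add_lt_add_left (by simp) hq'
    _ ≤ (N + i : ℕ) := by
        rw [add_comm]
        exact_mod_cast le_rfl

lemma Mi_le_Tc {i c : ℕ} (hic : i ≤ c) (Y : Submodule K (Polynomial K)) :
    Mi K i Y ≤ Tc K c Y := by
  refine le_iSup₂_of_le i ?_ le_rfl
  simpa using Nat.lt_succ_of_le hic

lemma Tc_le {c : ℕ} {Y : Submodule K (Polynomial K)} {W : Submodule K (Polynomial K)}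
    (h : ∀ i ≤ c, Mi K i Y ≤ W) : Tc K c Y ≤ W := by
  refine iSup₂_le fun i hi => h i ?_
  simpa using Nat.lt_succ_iff.1 (Finset.mem_range.1 hi)

lemma Tc_zero (Y : Submodule K (Polynomial K)) : Tc K 0 Y = Y := by
  refine le_antisymm (Tc_le fun i hi => ?_) ?_
  · interval_cases i
    rw [Mi_zero]
  · conv_lhs => rw [← Mi_zero (K := K) Y]
    exact Mi_le_Tc (Nat.le_refl 0) Y

lemma Tc_le_degreeLT {c N : ℕ} {Y : Submodule K (Polynomial K)}
    (h : Y ≤ Polynomial.degreeLT K N) : Tc K c Y ≤ Polynomial.degreeLT K (N + c) := by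
  refine Tc_le fun i hi => le_trans (Mi_degreeLT_le h) (degreeLT_mono ?_)
  omega

lemma mul_mem_Tc {c : ℕ} {Y : Submodule K (Polynomial K)} {p q : Polynomial K}
    (hp : p ∈ Polynomial.degreeLT K (c + 1)) (hq : q ∈ Y) : p * q ∈ Tc K c Y := by
  rw [Polynomial.mem_degreeLT] at hp
  by_cases hp0 : p = 0
  · simp [hp0]
  have hnd : p.natDegree < c + 1 := by
    rwa [Polynomial.degree_eq_natDegree hp0, Nat.cast_lt] at hp
  have hrw := p.as_sum_range' (c + 1) hnd
  rw [hrw, Finset.sum_mul]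
  refine Submodule.sum_mem _ fun i hi => ?_
  have : (Polynomial.monomial i (p.coeff i)) * q =
      (p.coeff i) • ((Polynomial.X : Polynomial K) ^ i * q) := by
    rw [Polynomial.smul_eq_C_mul, ← Polynomial.C_mul_X_pow_eq_monomial, mul_assoc]
  rw [this]
  exact Submodule.smul_mem _ _ (Mi_le_Tc (Nat.lt_succ_iff.1 (Finset.mem_range.1 hi)) Y
    (mem_Mi hq))

lemma Tc_sup_step (c : ℕ) (Y : Submodule K (Polynomial K)) :
    Tc K c (Y ⊔ Mi K 1 Y) = Tc K (c + 1) Y := by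
  refine le_antisymm (Tc_le fun i hi => ?_) (Tc_le fun i hi => ?_)
  · rw [Mi_sup, Mi_Mi]
    exact sup_le (Mi_le_Tc (by omega) Y) (Mi_le_Tc (by omega) Y)
  · rcases Nat.lt_or_ge i (c + 1) with h | h
    · exact le_trans (Mi_mono le_sup_left) (Mi_le_Tc (by omega) _)
    · have : i = c + 1 := by omega
      subst this
      have : Mi K (c + 1) Y = Mi K c (Mi K 1 Y) := by rw [Mi_Mi]
      rw [this]
      exact le_trans (Mi_mono le_sup_right) (Mi_le_Tc (by omega) _)


lemma smul_one_eq_C (a : K) : a • (1 : Polynomial K) = Polynomial.C a := by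
  rw [Polynomial.smul_eq_C_mul, mul_one]

lemma degreeLT_one_eq_span : (Polynomial.degreeLT K 1 : Submodule K (Polynomial K)) =
    Submodule.span K {(1 : Polynomial K)} := by
  ext p
  rw [Polynomial.mem_degreeLT, Submodule.mem_span_singleton]
  constructor
  · intro h
    by_cases hp0 : p = 0
    · exact ⟨0, by simp [hp0]⟩
    have h1 : p.natDegree < 1 := (Polynomial.natDegree_lt_iff_degree_lt hp0).2 (by exact_mod_cast h)
    have h2 : p = Polynomial.C (p.coeff 0) :=
      Polynomial.eq_C_of_natDegree_eq_zero (by omega)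
    exact ⟨p.coeff 0, by rw [smul_one_eq_C, ← h2]⟩
  · rintro ⟨a, rfl⟩
    rw [smul_one_eq_C]
    exact lt_of_le_of_lt Polynomial.degree_C_le (by exact_mod_cast Nat.zero_lt_one)

lemma degreeLT_succ_sup (n : ℕ) :
    (Polynomial.degreeLT K (n + 1) : Submodule K (Polynomial K)) =
      Polynomial.degreeLT K n ⊔ Submodule.span K {(Polynomial.X : Polynomial K) ^ n} := by
  refine le_antisymm ?_ (sup_le ?_ ?_)
  · intro p hp
    rw [Polynomial.mem_degreeLT] at hp
    by_cases hp0 : p = 0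
    · simp [hp0]
    have hnd : p.natDegree < n + 1 := (Polynomial.natDegree_lt_iff_degree_lt hp0).2 hp
    have hrw := p.as_sum_range' (n + 1) hnd
    rw [hrw]
    refine Submodule.sum_mem _ fun i hi => ?_
    have hi' : i < n + 1 := Finset.mem_range.1 hi
    rcases Nat.lt_or_ge i n with h | h
    · refine Submodule.mem_sup_left ?_
      rw [Polynomial.mem_degreeLT]
      exact lt_of_le_of_lt (Polynomial.degree_monomial_le i _) (by exact_mod_cast h)
    · have : i = n := by omega
      subst this
      refine Submodule.mem_sup_right ?_
      rw [Submodule.mem_span_singleton]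
      exact ⟨p.coeff i, by rw [Polynomial.smul_eq_C_mul, Polynomial.C_mul_X_pow_eq_monomial]⟩
  · exact degreeLT_mono (by omega)
  · rw [Submodule.span_singleton_le_iff_mem, Polynomial.mem_degreeLT]
    exact lt_of_le_of_lt (Polynomial.degree_X_pow_le n) (by exact_mod_cast Nat.lt_succ_self n)

lemma exists_ne_zero_of_finrank_pos {Y : Submodule K (Polynomial K)}
    (h : 0 < Module.finrank K Y) : ∃ p ∈ Y, p ≠ (0 : Polynomial K) := by
  by_contra hc
  push_neg at hc
  have hbot : Y = ⊥ := by
    rw [Submodule.eq_bot_iff]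
    exact hc
  rw [hbot] at h
  simp at h

lemma not_X_stable {N : ℕ} {Y : Submodule K (Polynomial K)}
    (hN : Y ≤ Polynomial.degreeLT K N) (hY : 0 < Module.finrank K Y) :
    ¬ (Mi K 1 Y ≤ Y) := by
  intro hstab
  obtain ⟨p, hpY, hp0⟩ := exists_ne_zero_of_finrank_pos hY
  have key : ∀ n : ℕ, (Polynomial.X : Polynomial K) ^ n * p ∈ Y := by
    intro n
    induction n with
    | zero => simpa using hpY
    | succ n ih =>
      have h1 : (Polynomial.X : Polynomial K) ^ (n + 1) * p =
          Polynomial.X * ((Polynomial.X : Polynomial K) ^ n * p) := by ring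
      rw [h1]
      exact hstab ⟨_, ih, by simp [Mi, pow_one]⟩
  have hmem := hN (key N)
  rw [Polynomial.mem_degreeLT] at hmem
  have hne : (Polynomial.X : Polynomial K) ^ N * p ≠ 0 :=
    mul_ne_zero (pow_ne_zero _ Polynomial.X_ne_zero) hp0
  have hdeg : N ≤ ((Polynomial.X : Polynomial K) ^ N * p).natDegree := by
    rw [Polynomial.natDegree_mul (pow_ne_zero _ Polynomial.X_ne_zero) hp0,
      Polynomial.natDegree_X_pow]
    omega
  rw [← Polynomial.natDegree_lt_iff_degree_lt hne] at hmem
  omega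

theorem structure_thm (N : ℕ) : ∀ d : ℕ, ∀ Y : Submodule K (Polynomial K),
    Y ≤ Polynomial.degreeLT K N →
    Module.finrank K Y = d + 1 →
    Module.finrank K ((Y ⊔ Mi K 1 Y : Submodule K (Polynomial K))) ≤ d + 2 →
    ∃ g : Polynomial K, g ≠ 0 ∧
      Y = (Polynomial.degreeLT K (d + 1)).map (LinearMap.mulLeft K g) := by
  intro d
  induction d with
  | zero =>
    intro Y hN hrk _
    obtain ⟨g, hgY, hg0⟩ := exists_ne_zero_of_finrank_pos (Y := Y) (by omega)
    refine ⟨g, hg0, ?_⟩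
    have hle : Submodule.span K {g} ≤ Y := by
      rw [Submodule.span_singleton_le_iff_mem]; exact hgY
    haveI : FiniteDimensional K Y := Submodule.finiteDimensional_of_le hN
    have heq : Submodule.span K {g} = Y :=
      Submodule.eq_of_le_of_finrank_le hle (by rw [hrk, finrank_span_singleton hg0])
    rw [← heq, degreeLT_one_eq_span, Submodule.map_span]
    congr 1
    simp
  | succ d ih =>
    intro Y hN hrk hgrow
    haveI : FiniteDimensional K Y := Submodule.finiteDimensional_of_le hN
    have hMile : Mi K 1 Y ≤ Polynomial.degreeLT K (N + 1) := by
      rintro q ⟨p, hp, rfl⟩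
      have hdp := Polynomial.mem_degreeLT.1 (hN hp)
      rw [Polynomial.mem_degreeLT]
      simp only [LinearMap.mulLeft_apply, pow_one]
      calc Polynomial.degree ((Polynomial.X : Polynomial K) * p)
          ≤ 1 + Polynomial.degree p := by
            rw [← Polynomial.degree_X (R := K)]
            exact Polynomial.degree_mul_le _ _
        _ < 1 + N := WithBot.add_lt_add_left (by simp) hdp
        _ ≤ ((N + 1 : ℕ) : WithBot ℕ) := by
            rw [add_comm]; exact_mod_cast le_rfl
    haveI : FiniteDimensional K (Mi K 1 Y) := Submodule.finiteDimensional_of_le hMile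
    set D : Submodule K (Polynomial K) :=
      Y ⊓ Submodule.comap (LinearMap.mulLeft K (Polynomial.X : Polynomial K)) Y with hD
    have hmapD : D.map (LinearMap.mulLeft K (Polynomial.X : Polynomial K)) = Mi K 1 Y ⊓ Y := by
      apply le_antisymm
      · rintro q ⟨p, ⟨hp1, hp2⟩, rfl⟩
        exact ⟨⟨p, hp1, by simp [Mi, pow_one]⟩, hp2⟩
      · rintro q ⟨⟨p, hp, rfl⟩, hq⟩
        refine ⟨p, ⟨hp, ?_⟩, by simp [pow_one]⟩
        simpa [pow_one] using hq
    have hrkD : Module.finrank K D = Module.finrank K ((Mi K 1 Y ⊓ Y : Submodule K (Polynomial K))) := by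
      rw [← hmapD, finrank_map_mulLeft _ Polynomial.X_ne_zero]
    have hsum := Submodule.finrank_sup_add_finrank_inf_eq Y (Mi K 1 Y)
    rw [finrank_Mi, hrk] at hsum
    have hDge : d + 1 ≤ Module.finrank K D := by
      rw [hrkD, inf_comm]
      omega
    have hDltY : D < Y := by
      rcases lt_or_eq_of_le (inf_le_left : D ≤ Y) with h | h
      · exact h
      · exfalso
        apply not_X_stable hN (by omega : 0 < Module.finrank K Y)
        rintro q ⟨p, hp, rfl⟩
        have hpD : p ∈ D := by rw [hD, h]; exact hp
        have := hpD.2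
        simpa [pow_one] using this
    have hDle : Module.finrank K D ≤ d + 1 := by
      have := Submodule.finrank_lt_finrank_of_lt hDltY
      omega
    have hrkD' : Module.finrank K D = d + 1 := le_antisymm hDle hDge
    have hXD : Mi K 1 D ≤ Y := by
      rintro q ⟨p, hp, rfl⟩
      have hmem : (LinearMap.mulLeft K (Polynomial.X : Polynomial K)) p ∈ Mi K 1 Y ⊓ Y := by
        rw [← hmapD]; exact ⟨p, hp, by simp [pow_one]⟩
      have := hmem.2
      simpa [pow_one] using this
    have hDN : D ≤ Polynomial.degreeLT K N := le_trans inf_le_left hN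
    have hgrowD : Module.finrank K ((D ⊔ Mi K 1 D : Submodule K (Polynomial K))) ≤ d + 2 := by
      have hle : D ⊔ Mi K 1 D ≤ Y := sup_le inf_le_left hXD
      rcases eq_or_lt_of_le hle with h | h
      · rw [h, hrk]
      · have := Submodule.finrank_lt_finrank_of_lt h
        omega
    obtain ⟨g, hg0, hgD⟩ := ih D hDN hrkD' hgrowD
    refine ⟨g, hg0, ?_⟩
    -- show map g (degreeLT (d+2)) ≤ Y then equality by finrank
    have key : (Polynomial.degreeLT K (d + 2)).map (LinearMap.mulLeft K g) ≤ Y := by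
      rw [show d + 2 = (d + 1) + 1 from rfl, degreeLT_succ_sup, Submodule.map_sup, ← hgD]
      refine sup_le inf_le_left ?_
      rw [Submodule.map_span]
      have himg : (LinearMap.mulLeft K g) '' {(Polynomial.X : Polynomial K) ^ (d + 1)} =
          {g * (Polynomial.X : Polynomial K) ^ (d + 1)} := by
        simp
      rw [himg, Submodule.span_singleton_le_iff_mem]
      have hmem : g * (Polynomial.X : Polynomial K) ^ d ∈ D := by
        rw [hgD]
        refine ⟨(Polynomial.X : Polynomial K) ^ d, ?_, rfl⟩
        rw [SetLike.mem_coe, Polynomial.mem_degreeLT]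
        exact lt_of_le_of_lt (Polynomial.degree_X_pow_le d) (by exact_mod_cast Nat.lt_succ_self d)
      have : g * (Polynomial.X : Polynomial K) ^ (d + 1) =
          (Polynomial.X : Polynomial K) ^ 1 * (g * (Polynomial.X : Polynomial K) ^ d) := by
        ring
      rw [this]
      exact hXD ⟨_, hmem, rfl⟩
    have hfr : Module.finrank K ((Polynomial.degreeLT K (d + 2)).map (LinearMap.mulLeft K g)) =
        d + 2 := by
      rw [finrank_map_mulLeft _ hg0, finrank_degreeLT]
    exact (Submodule.eq_of_le_of_finrank_le key (by rw [hrk, hfr])).symm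


theorem growth [IsAlgClosed K] {m : ℕ} {Y : Submodule K (Polynomial K)}
    (hN : Y ≤ Polynomial.degreeLT K (m + 1))
    (h1 : ∀ α : K, ∃ p ∈ Y, Polynomial.eval α p ≠ 0)
    (h2 : ∃ p ∈ Y, p.coeff m ≠ 0)
    (hd : Module.finrank K Y ≤ m) :
    Module.finrank K Y + 2 ≤
      Module.finrank K ((Y ⊔ Mi K 1 Y : Submodule K (Polynomial K))) := by
  by_contra hcon
  push_neg at hcon
  obtain ⟨p0, hp0Y, hp0⟩ := h2
  have hp0ne : p0 ≠ 0 := fun h => hp0 (by simp [h])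
  haveI : FiniteDimensional K Y := Submodule.finiteDimensional_of_le hN
  have hYpos : 0 < Module.finrank K Y := by
    have hbot : (⊥ : Submodule K (Polynomial K)) < Y :=
      lt_of_le_of_ne bot_le (fun h => hp0ne (by rw [← h] at hp0Y; simpa using hp0Y))
    have := Submodule.finrank_lt_finrank_of_lt hbot
    simpa using this
  set e := Module.finrank K Y with he
  obtain ⟨g, hg0, hgY⟩ := structure_thm (m + 1) (e - 1) Y hN (by omega) (by omega)
  have hee : e - 1 + 1 = e := by omega
  -- the element with nonzero coeff m
  rw [hgY] at hp0Y
  obtain ⟨q, hq, rfl⟩ := hp0Y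
  have hq' : q ∈ Polynomial.degreeLT K (e - 1 + 1) := hq
  rw [Polynomial.mem_degreeLT] at hq'
  have hgq0 : (LinearMap.mulLeft K g) q ≠ 0 := fun h => hp0 (by rw [h]; simp)
  have hgqeq : (LinearMap.mulLeft K g) q = g * q := rfl
  rw [hgqeq] at hgq0 hp0
  have hqne : q ≠ 0 := fun h => hgq0 (by rw [h, mul_zero])
  have hqnd : q.natDegree < e - 1 + 1 := (Polynomial.natDegree_lt_iff_degree_lt hqne).2 hq'
  have hmle : m ≤ (g * q).natDegree := by
    by_contra hlt
    exact hp0 (Polynomial.coeff_eq_zero_of_natDegree_lt (by omega))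
  rw [Polynomial.natDegree_mul (fun h => hgq0 (by rw [h, zero_mul]) : g ≠ 0) hqne] at hmle
  have hgnd : 1 ≤ g.natDegree := by omega
  have hgdeg : g.degree ≠ 0 := by
    rw [Polynomial.degree_eq_natDegree hg0]
    exact_mod_cast (by omega : g.natDegree ≠ 0)
  obtain ⟨α, hα⟩ := IsAlgClosed.exists_root g hgdeg
  obtain ⟨p, hpY, hpe⟩ := h1 α
  rw [hgY] at hpY
  obtain ⟨r, _, rfl⟩ := hpY
  apply hpe
  have : (LinearMap.mulLeft K g) r = g * r := rfl
  rw [this, Polynomial.eval_mul, hα, zero_mul]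

theorem main_uni [IsAlgClosed K] : ∀ c m : ℕ, ∀ Y : Submodule K (Polynomial K),
    Y ≤ Polynomial.degreeLT K (m + 1) →
    (∀ α : K, ∃ p ∈ Y, Polynomial.eval α p ≠ 0) →
    (∃ p ∈ Y, p.coeff m ≠ 0) →
    m + 1 ≤ Module.finrank K Y + c →
    Tc K c Y = Polynomial.degreeLT K (m + c + 1) := by
  intro c
  induction c with
  | zero =>
    intro m Y hN _ _ hcod
    rw [Tc_zero]
    exact Submodule.eq_of_le_of_finrank_le hN (by rw [finrank_degreeLT]; omega)
  | succ c ih =>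
    intro m Y hN h1 h2 hcod
    haveI : FiniteDimensional K Y := Submodule.finiteDimensional_of_le hN
    set Y' : Submodule K (Polynomial K) := Y ⊔ Mi K 1 Y with hY'
    have hN' : Y' ≤ Polynomial.degreeLT K (m + 2) :=
      sup_le (le_trans hN (degreeLT_mono (by omega)))
        (le_trans (Mi_degreeLT_le hN) (degreeLT_mono (by omega)))
    haveI : FiniteDimensional K Y' := Submodule.finiteDimensional_of_le hN'
    have h1' : ∀ α : K, ∃ p ∈ Y', Polynomial.eval α p ≠ 0 := by
      intro α
      obtain ⟨p, hp, hpe⟩ := h1 α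
      exact ⟨p, le_sup_left (a := Y) (b := Mi K 1 Y) hp, hpe⟩
    have h2' : ∃ p ∈ Y', p.coeff (m + 1) ≠ 0 := by
      obtain ⟨p, hp, hpc⟩ := h2
      refine ⟨Polynomial.X * p, ?_, ?_⟩
      · have := mem_Mi (i := 1) hp
        rw [pow_one] at this
        exact le_sup_right (a := Y) (b := Mi K 1 Y) this
      · rwa [Polynomial.coeff_X_mul]
    have hcod' : m + 2 ≤ Module.finrank K Y' + c := by
      rcases le_or_gt (Module.finrank K Y) m with hle | hgt
      · have hg := growth hN h1 h2 hle
        rw [← hY'] at hg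
        omega
      · -- Y = degreeLT (m+1), and then degreeLT (m+2) ≤ Y'
        have hYeq : Y = Polynomial.degreeLT K (m + 1) :=
          Submodule.eq_of_le_of_finrank_le hN (by rw [finrank_degreeLT]; omega)
        have hfull : Polynomial.degreeLT K (m + 2) ≤ Y' := by
          rw [show m + 2 = (m + 1) + 1 from rfl, degreeLT_succ_sup]
          refine sup_le (hYeq ▸ le_sup_left) ?_
          rw [Submodule.span_singleton_le_iff_mem]
          have hXm : (Polynomial.X : Polynomial K) ^ m ∈ Y := by
            rw [hYeq, Polynomial.mem_degreeLT]
            exact lt_of_le_of_lt (Polynomial.degree_X_pow_le m) (by exact_mod_cast Nat.lt_succ_self m)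
          have := mem_Mi (i := 1) hXm
          rw [pow_one] at this
          have hXX : (Polynomial.X : Polynomial K) ^ (m + 1) =
              Polynomial.X * (Polynomial.X : Polynomial K) ^ m := by ring
          rw [hXX]
          exact le_sup_right (a := Y) (b := Mi K 1 Y) this
        have heq : Y' = Polynomial.degreeLT K (m + 2) := le_antisymm hN' hfull
        rw [heq, finrank_degreeLT]
        omega
    have := ih (m + 1) Y' hN' h1' h2' hcod'
    rw [hY', Tc_sup_step] at this
    rw [this]
    congr 1
    omega


/-- dehomogenization: `x0 ↦ X`, `x1 ↦ 1` -/
def phi (K : Type) [Field K] : MvPolynomial (Fin 2) K →ₐ[K] Polynomial K :=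
  MvPolynomial.aeval ![Polynomial.X, 1]

/-- exponent vector `(i, n - i)` -/
def fs (n i : ℕ) : Fin 2 →₀ ℕ := Finsupp.equivFunOnFinite.symm ![i, n - i]

@[simp] lemma fs_apply_zero (n i : ℕ) : fs n i 0 = i := rfl
@[simp] lemma fs_apply_one (n i : ℕ) : fs n i 1 = n - i := rfl

lemma finsupp_degree_fin2 (d : Fin 2 →₀ ℕ) : d.degree = d 0 + d 1 := by
  rw [Finsupp.degree_apply]
  rw [Finset.sum_subset (Finset.subset_univ d.support)
    (fun x _ hx => Finsupp.notMem_support_iff.1 hx)]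
  exact Fin.sum_univ_two d

lemma fs_degree {n i : ℕ} (h : i ≤ n) : (fs n i).degree = n := by
  rw [finsupp_degree_fin2]
  simp
  omega

lemma isHomog_sum_fin2 {f : MvPolynomial (Fin 2) K} {n : ℕ} (hf : f.IsHomogeneous n)
    {d : Fin 2 →₀ ℕ} (hd : MvPolynomial.coeff d f ≠ 0) : d 0 + d 1 = n := by
  have := hf hd
  rw [show (Finsupp.weight 1 : (Fin 2 →₀ ℕ) →+ ℕ) = Finsupp.weight (fun _ => 1) from rfl,
    ← Finsupp.degree_eq_weight_one] at this
  rw [← finsupp_degree_fin2]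
  exact this

lemma phi_monomial (d : Fin 2 →₀ ℕ) (a : K) :
    phi K (MvPolynomial.monomial d a) = Polynomial.C a * Polynomial.X ^ (d 0) := by
  rw [phi, MvPolynomial.aeval_monomial]
  rw [Finsupp.prod_fintype _ _ (fun i => pow_zero _), Fin.prod_univ_two]
  simp [Polynomial.algebraMap_eq]

/-- homogenization (degree `n`) as a linear map -/
def theta (K : Type) [Field K] (n : ℕ) : Polynomial K →ₗ[K] MvPolynomial (Fin 2) K :=
  ∑ i ∈ Finset.range (n + 1), (MvPolynomial.monomial (fs n i)).comp (Polynomial.lcoeff K i)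

lemma theta_apply (n : ℕ) (p : Polynomial K) :
    theta K n p = ∑ i ∈ Finset.range (n + 1), MvPolynomial.monomial (fs n i) (p.coeff i) := by
  rw [theta, LinearMap.sum_apply]
  rfl

lemma theta_mem (n : ℕ) (p : Polynomial K) :
    theta K n p ∈ homogeneousSubmodule (Fin 2) K n := by
  rw [theta_apply]
  refine Submodule.sum_mem _ fun i hi => ?_
  rw [mem_homogeneousSubmodule]
  exact isHomogeneous_monomial _ (fs_degree (Nat.lt_succ_iff.1 (Finset.mem_range.1 hi)))

lemma phi_theta {n : ℕ} {p : Polynomial K} (hp : p ∈ Polynomial.degreeLT K (n + 1)) :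
    phi K (theta K n p) = p := by
  rw [Polynomial.mem_degreeLT] at hp
  by_cases hp0 : p = 0
  · simp [hp0, theta_apply]
  have hnd : p.natDegree < n + 1 := (Polynomial.natDegree_lt_iff_degree_lt hp0).2 hp
  rw [theta_apply, map_sum]
  conv_rhs => rw [p.as_sum_range' (n + 1) hnd]
  refine Finset.sum_congr rfl fun i _ => ?_
  rw [phi_monomial, fs_apply_zero, Polynomial.C_mul_X_pow_eq_monomial]

lemma theta_phi {n : ℕ} {f : MvPolynomial (Fin 2) K} (hf : f.IsHomogeneous n) :
    theta K n (phi K f) = f := by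
  have key : ∀ d : Fin 2 →₀ ℕ, ∀ a : K, d 0 + d 1 = n →
      theta K n (phi K (MvPolynomial.monomial d a)) = MvPolynomial.monomial d a := by
    intro d a hd
    rw [phi_monomial, theta_apply]
    have hcoeff : ∀ i : ℕ, (Polynomial.C a * Polynomial.X ^ (d 0)).coeff i =
        if i = d 0 then a else 0 := by
      intro i
      rw [Polynomial.coeff_C_mul, Polynomial.coeff_X_pow]
      simp [eq_comm]
    have hfs : fs n (d 0) = d := by
      ext j
      fin_cases j
      · simp
      · simp only [fs_apply_one]
        show n - d 0 = d 1
        omega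
    rw [Finset.sum_eq_single (d 0)]
    · rw [hcoeff, if_pos rfl, hfs]
    · intro i _ hne
      rw [hcoeff, if_neg hne, map_zero]
    · intro h
      exfalso
      exact h (Finset.mem_range.2 (by omega))
  conv_rhs => rw [f.as_sum]
  conv_lhs => rw [f.as_sum, map_sum, map_sum]
  refine Finset.sum_congr rfl fun d hd => ?_
  exact key d _ (isHomog_sum_fin2 hf (MvPolynomial.mem_support_iff.1 hd))

lemma phi_mem_degreeLT {n : ℕ} {f : MvPolynomial (Fin 2) K} (hf : f.IsHomogeneous n) :
    phi K f ∈ Polynomial.degreeLT K (n + 1) := by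
  have hrw : phi K f = ∑ d ∈ f.support, phi K (MvPolynomial.monomial d (MvPolynomial.coeff d f)) := by
    conv_lhs => rw [f.as_sum]
    rw [map_sum]
  rw [hrw]
  refine Submodule.sum_mem _ fun d hd => ?_
  rw [phi_monomial, Polynomial.mem_degreeLT]
  refine lt_of_le_of_lt (Polynomial.degree_C_mul_X_pow_le _ _) ?_
  have := isHomog_sum_fin2 hf (MvPolynomial.mem_support_iff.1 hd)
  exact_mod_cast (by omega : d 0 < n + 1)

lemma eval_phi (α : K) (f : MvPolynomial (Fin 2) K) :
    MvPolynomial.eval ![α, 1] f = Polynomial.eval α (phi K f) := by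
  have h : (MvPolynomial.eval ![α, 1] : MvPolynomial (Fin 2) K →+* K) =
      (Polynomial.evalRingHom α).comp
        ((phi K : MvPolynomial (Fin 2) K →ₐ[K] Polynomial K) :
          MvPolynomial (Fin 2) K →+* Polynomial K) := by
    apply MvPolynomial.ringHom_ext
    · intro a
      simp [phi]
    · intro i
      fin_cases i <;> simp [phi]
  have := RingHom.congr_fun h f
  simpa using this

lemma eval_infty {n : ℕ} {f : MvPolynomial (Fin 2) K} (hf : f.IsHomogeneous n) :
    MvPolynomial.eval ![1, 0] f = (phi K f).coeff n := by
  conv_lhs => rw [← theta_phi hf]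
  rw [theta_apply, map_sum]
  rw [Finset.sum_eq_single n]
  · rw [MvPolynomial.eval_monomial]
    rw [Finsupp.prod_fintype _ _ (fun i => pow_zero _), Fin.prod_univ_two]
    simp [Nat.sub_self]
  · intro i hi hne
    rw [MvPolynomial.eval_monomial]
    rw [Finsupp.prod_fintype _ _ (fun i => pow_zero _), Fin.prod_univ_two]
    simp only [Matrix.cons_val_zero, Matrix.cons_val_one, Matrix.head_cons, one_pow, one_mul]
    rw [fs_apply_one, zero_pow (by simp at hi; omega : n - i ≠ 0), mul_zero]
  · intro h
    exfalso
    exact h (Finset.mem_range.2 (by omega))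


end Stmt11Aux

open Stmt11Aux in
/-- If `Z ⊆ S_m` has codimension `c` and no base points in `ℙ¹`, then `S_c · Z = S_{m+c}`. -/
theorem stmt11 (K : Type) [Field K] [IsAlgClosed K] [CharZero K] (m c : ℕ)
    (Z : Submodule K (MvPolynomial (Fin 2) K))
    (hZ : Z ≤ homogeneousSubmodule (Fin 2) K m)
    (hbp : ¬ ∃ α : Fin 2 → K, α ≠ 0 ∧ ∀ f ∈ Z, eval α f = 0)
    (hcodim : Module.finrank K Z + c = m + 1) :
    Submodule.span K
        {p : MvPolynomial (Fin 2) K | ∃ g f, g.IsHomogeneous c ∧ f ∈ Z ∧ p = g * f} =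
      homogeneousSubmodule (Fin 2) K (m + c) := by
  classical
  set φl : MvPolynomial (Fin 2) K →ₗ[K] Polynomial K := (phi K).toLinearMap with hφl
  set Y : Submodule K (Polynomial K) := Z.map φl with hY
  have hZhom : ∀ f ∈ Z, MvPolynomial.IsHomogeneous f m := fun f hf =>
    (mem_homogeneousSubmodule m f).1 (hZ hf)
  have hYle : Y ≤ Polynomial.degreeLT K (m + 1) := by
    rintro q ⟨f, hf, rfl⟩
    exact phi_mem_degreeLT (hZhom f hf)
  have hbp' : ∀ v : Fin 2 → K, v ≠ 0 → ∃ f ∈ Z, MvPolynomial.eval v f ≠ 0 := by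
    intro v hv
    by_contra hc
    push_neg at hc
    exact hbp ⟨v, hv, hc⟩
  have h1 : ∀ α : K, ∃ p ∈ Y, Polynomial.eval α p ≠ 0 := by
    intro α
    obtain ⟨f, hf, hfe⟩ := hbp' ![α, 1] (by
      intro h
      have := congrFun h 1
      simp at this)
    refine ⟨φl f, ⟨f, hf, rfl⟩, ?_⟩
    show Polynomial.eval α (phi K f) ≠ 0
    rwa [← eval_phi]
  have h2 : ∃ p ∈ Y, p.coeff m ≠ 0 := by
    obtain ⟨f, hf, hfe⟩ := hbp' ![1, 0] (by
      intro h
      have := congrFun h 0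
      simp at this)
    refine ⟨φl f, ⟨f, hf, rfl⟩, ?_⟩
    show (phi K f).coeff m ≠ 0
    rwa [← eval_infty (hZhom f hf)]
  have hinj : ∀ n : ℕ, ∀ f g : MvPolynomial (Fin 2) K, f.IsHomogeneous n → g.IsHomogeneous n →
      phi K f = phi K g → f = g := by
    intro n f g hfh hgh he
    rw [← theta_phi hfh, ← theta_phi hgh, he]
  have hfr : Module.finrank K Y = Module.finrank K Z := by
    have hrange : Y = LinearMap.range (φl.comp Z.subtype) := by
      rw [LinearMap.range_comp, Submodule.range_subtype]
    rw [hrange, LinearMap.finrank_range_of_inj]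
    intro a b hab
    exact Subtype.ext (hinj m a b (hZhom a a.2) (hZhom b b.2) hab)
  have hU := main_uni c m Y hYle h1 h2 (by omega)
  have hSle : Submodule.span K
      {p : MvPolynomial (Fin 2) K | ∃ g f, g.IsHomogeneous c ∧ f ∈ Z ∧ p = g * f} ≤
      homogeneousSubmodule (Fin 2) K (m + c) := by
    rw [Submodule.span_le]
    rintro p ⟨g, f, hg, hf, rfl⟩
    rw [SetLike.mem_coe, mem_homogeneousSubmodule]
    have h := (hZhom f hf).mul hg
    rwa [mul_comm] at h
  have hmap : Submodule.map φl (Submodule.span K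
      {p : MvPolynomial (Fin 2) K | ∃ g f, g.IsHomogeneous c ∧ f ∈ Z ∧ p = g * f}) =
      Tc K c Y := by
    rw [Submodule.map_span]
    apply le_antisymm
    · rw [Submodule.span_le]
      rintro q ⟨p, ⟨g, f, hg, hf, rfl⟩, rfl⟩
      show phi K (g * f) ∈ (Tc K c Y : Set (Polynomial K))
      rw [map_mul]
      exact mul_mem_Tc (phi_mem_degreeLT hg) ⟨f, hf, rfl⟩
    · refine Tc_le fun i hi => ?_
      rintro q ⟨p, ⟨f, hf, rfl⟩, rfl⟩
      refine Submodule.subset_span ?_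
      have hgh : (MvPolynomial.X 0 ^ i * MvPolynomial.X 1 ^ (c - i) :
          MvPolynomial (Fin 2) K).IsHomogeneous c := by
        have h := ((MvPolynomial.isHomogeneous_X K (0 : Fin 2)).pow i).mul
          ((MvPolynomial.isHomogeneous_X K (1 : Fin 2)).pow (c - i))
        have he : 1 * i + 1 * (c - i) = c := by omega
        rwa [he] at h
      refine ⟨MvPolynomial.X 0 ^ i * MvPolynomial.X 1 ^ (c - i) * f,
        ⟨MvPolynomial.X 0 ^ i * MvPolynomial.X 1 ^ (c - i), f, hgh, hf, rfl⟩, ?_⟩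
      show phi K (MvPolynomial.X 0 ^ i * MvPolynomial.X 1 ^ (c - i) * f) =
        (LinearMap.mulLeft K ((Polynomial.X : Polynomial K) ^ i)) (φl f)
      have h0 : phi K (MvPolynomial.X (0 : Fin 2)) = Polynomial.X := by simp [phi]
      have h1' : phi K (MvPolynomial.X (1 : Fin 2)) = 1 := by simp [phi]
      rw [map_mul, map_mul, map_pow, map_pow, h0, h1', one_pow, mul_one]
      rfl
  apply le_antisymm hSle
  intro q hq
  have hqh : q.IsHomogeneous (m + c) := (mem_homogeneousSubmodule _ _).1 hq
  have hq' : φl q ∈ Tc K c Y := by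
    rw [hU]
    exact phi_mem_degreeLT hqh
  rw [← hmap] at hq'
  obtain ⟨s, hs, hse⟩ := hq'
  have hsh : s.IsHomogeneous (m + c) := (mem_homogeneousSubmodule _ _).1 (hSle hs)
  have heq : s = q := hinj (m + c) s q hsh hqh hse
  rwa [← heq]
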